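/- Let H : ℂⁿ → ℂⁿ be a polynomial map. Suppose for some m ≥ d, the trace of (∑_{i=1}^m (JH)(α_i))^d is zero for all α₁, ..., α_m ∈ ℂⁿ. Then for all s ∈ ℕ, all b₁, ..., b_s ∈ ℂ, and all α₁, ..., α_s ∈ ℂⁿ, the trace of (∑_{i=1}^s b_i · (JH)(α_i))^d is also zero. -/

import Mathlib

open MvPolynomial

/-- The Jacobian matrix of a polynomial map `F : ℂⁿ → ℂᵐ`, evaluated at `α`. -/
noncomputable def jacEval {n m : ℕ} (F : Fin m → MvPolynomial (Fin n) ℂ)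
    (α : Fin n → ℂ) : Matrix (Fin m) (Fin n) ℂ :=
  Matrix.of fun i j => eval α (pderiv j (F i))


namespace Stmt17Aux

noncomputable def shiftFun {s : ℕ} (i : Fin s) : Fin s → MvPolynomial (Fin s) ℂ :=
  fun j => if j = i then X j + 1 else X j

lemma eval_shift {s : ℕ} (i : Fin s) (p : MvPolynomial (Fin s) ℂ) (x : Fin s → ℂ) :
    eval x (aeval (shiftFun i) p) = eval (fun j => eval x (shiftFun i j)) p := by
  induction p using MvPolynomial.induction_on with
  | C a => simp
  | add p q hp hq => simp only [map_add, hp, hq]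
  | mul_X p j hp => simp only [map_mul, aeval_X, hp, eval_X]

lemma deg_pow_diff {s : ℕ} (i : Fin s) (e : ℕ) :
    ((X i + 1 : MvPolynomial (Fin s) ℂ) ^ e - X i ^ e).totalDegree ≤ e - 1 := by
  rcases e with _ | e
  · simp
  rw [add_pow, Finset.sum_range_succ]
  simp only [one_pow, mul_one, Nat.choose_self, Nat.cast_one]
  rw [add_sub_cancel_right]
  apply (totalDegree_finset_sum _ _).trans
  apply Finset.sup_le
  intro k hk
  have hk' : k ≤ e := by
    have := Finset.mem_range.mp hk; omega
  calc (X i ^ k * ((e+1).choose k : MvPolynomial (Fin s) ℂ)).totalDegree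
      ≤ (X i ^ k).totalDegree
        + (((e+1).choose k : MvPolynomial (Fin s) ℂ)).totalDegree := totalDegree_mul _ _
    _ ≤ k := by
        have h1 : ((((e+1).choose k : ℕ)) : MvPolynomial (Fin s) ℂ) = C (((e+1).choose k : ℕ) : ℂ) := by
          push_cast; simp
        rw [h1, totalDegree_C]
        simpa using (totalDegree_pow (X i) k).trans (by simp)
    _ ≤ e + 1 - 1 := by omega

lemma shift_monomial_deg {s : ℕ} (i : Fin s) (a : Fin s →₀ ℕ) (c : ℂ) (M : ℕ)
    (ha : (a.sum fun _ e => e) ≤ M + 1) :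
    (aeval (shiftFun i) (monomial a c) - monomial a c).totalDegree ≤ M := by
  classical
  rw [aeval_monomial, algebraMap_eq, monomial_eq]
  by_cases hai : a i = 0
  · have hprod : (a.prod fun j e => shiftFun i j ^ e) = a.prod fun j e => (X j : MvPolynomial (Fin s) ℂ) ^ e := by
      apply Finsupp.prod_congr
      intro j hj
      have hj' : j ≠ i := by
        intro hji; subst hji; exact (Finsupp.mem_support_iff.mp hj) hai
      simp [shiftFun, hj']
    rw [hprod, sub_self]
    simp
  · have hi : i ∈ a.support := Finsupp.mem_support_iff.mpr hai
    have h1 : (a.prod fun j e => shiftFun i j ^ e)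
        = (X i + 1) ^ a i * ∏ j ∈ a.support.erase i, (X j : MvPolynomial (Fin s) ℂ) ^ a j := by
      rw [Finsupp.prod, ← Finset.mul_prod_erase _ _ hi]
      congr 1
      · simp [shiftFun]
      · apply Finset.prod_congr rfl
        intro j hj
        have hj' : j ≠ i := (Finset.mem_erase.mp hj).1
        simp [shiftFun, hj']
    have h2 : (a.prod fun j e => (X j : MvPolynomial (Fin s) ℂ) ^ e)
        = X i ^ a i * ∏ j ∈ a.support.erase i, (X j : MvPolynomial (Fin s) ℂ) ^ a j := by
      rw [Finsupp.prod, ← Finset.mul_prod_erase _ _ hi]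
    rw [h1, h2]
    have harr : C c * ((X i + 1) ^ a i * ∏ j ∈ a.support.erase i, (X j : MvPolynomial (Fin s) ℂ) ^ a j)
        - C c * (X i ^ a i * ∏ j ∈ a.support.erase i, (X j : MvPolynomial (Fin s) ℂ) ^ a j)
        = C c * (((X i + 1) ^ a i - X i ^ a i) * ∏ j ∈ a.support.erase i, (X j : MvPolynomial (Fin s) ℂ) ^ a j) := by
      ring
    rw [harr]
    have hP : (∏ j ∈ a.support.erase i, (X j : MvPolynomial (Fin s) ℂ) ^ a j).totalDegree
        ≤ ∑ j ∈ a.support.erase i, a j := by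
      apply (totalDegree_finset_prod _ _).trans
      apply Finset.sum_le_sum
      intro j _
      exact (totalDegree_pow _ _).trans (by simp)
    have hsum : a i + ∑ j ∈ a.support.erase i, a j = a.sum fun _ e => e := by
      rw [Finsupp.sum, Finset.add_sum_erase _ _ hi]
    calc (C c * (((X i + 1) ^ a i - X i ^ a i) * ∏ j ∈ a.support.erase i, (X j : MvPolynomial (Fin s) ℂ) ^ a j)).totalDegree
        ≤ (C c).totalDegree + (((X i + 1) ^ a i - X i ^ a i) * ∏ j ∈ a.support.erase i, (X j : MvPolynomial (Fin s) ℂ) ^ a j).totalDegree := totalDegree_mul _ _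
      _ ≤ (C c).totalDegree + (((X i + 1 : MvPolynomial (Fin s) ℂ) ^ a i - X i ^ a i).totalDegree
            + (∏ j ∈ a.support.erase i, (X j : MvPolynomial (Fin s) ℂ) ^ a j).totalDegree) :=
          add_le_add le_rfl (totalDegree_mul _ _)
      _ ≤ 0 + ((a i - 1) + ∑ j ∈ a.support.erase i, a j) := by
          apply add_le_add (le_of_eq (totalDegree_C c))
          exact add_le_add (deg_pow_diff i (a i)) hP
      _ ≤ M := by omega

lemma shift_sub_deg {s : ℕ} (i : Fin s) (p : MvPolynomial (Fin s) ℂ) (M : ℕ)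
    (hp : p.totalDegree ≤ M + 1) :
    (aeval (shiftFun i) p - p).totalDegree ≤ M := by
  conv_lhs => rw [p.as_sum]
  rw [map_sum, ← Finset.sum_sub_distrib]
  apply (totalDegree_finset_sum _ _).trans
  apply Finset.sup_le
  intro a hA
  exact shift_monomial_deg i a _ M ((le_totalDegree hA).trans hp)

lemma eq_C_of_deg0 {s : ℕ} (p : MvPolynomial (Fin s) ℂ) (h : p.totalDegree = 0) :
    p = C (coeff 0 p) := by
  have hs := (totalDegree_eq_zero_iff _ p).mp h
  ext a
  by_cases ha : a = 0
  · subst ha; simp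
  · have hns : a ∉ p.support := fun hmem => ha (Finsupp.ext fun x => hs a hmem x)
    rw [notMem_support_iff] at hns
    rw [hns, coeff_C, if_neg (fun hh => ha hh.symm)]

lemma cast_cons {s : ℕ} (t : ℕ) (k : Fin s → ℕ) :
    (fun i => ((Fin.cons t k : Fin (s+1) → ℕ) i : ℂ)) = Fin.cons (t : ℂ) (fun i => (k i : ℂ)) := by
  funext i
  refine Fin.cases ?_ ?_ i <;> simp

lemma grid : ∀ {s : ℕ} (p : MvPolynomial (Fin s) ℂ),
    (∀ k : Fin s → ℕ, eval (fun i => (k i : ℂ)) p = 0) → p = 0 := by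
  intro s
  induction s with
  | zero =>
    intro p hp
    obtain ⟨c, rfl⟩ := C_surjective (Fin 0) p
    have := hp 0
    simpa using this
  | succ s ih =>
    intro p hp
    have hq : finSuccEquiv ℂ s p = 0 := by
      apply Polynomial.ext
      intro j
      rw [Polynomial.coeff_zero]
      apply ih
      intro k'
      have hr : Polynomial.map (eval fun i => (k' i : ℂ)) (finSuccEquiv ℂ s p) = 0 := by
        apply Polynomial.eq_zero_of_infinite_isRoot
        apply Set.Infinite.mono ?_ (Set.infinite_range_of_injective
          (f := (Nat.cast : ℕ → ℂ)) Nat.cast_injective)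
        rintro x ⟨t, rfl⟩
        show Polynomial.IsRoot _ _
        rw [Polynomial.IsRoot, ← eval_eq_eval_mv_eval']
        rw [← cast_cons t k']
        exact hp (Fin.cons t k')
      have h2 := congrArg (fun q => Polynomial.coeff q j) hr
      simpa [Polynomial.coeff_map] using h2
    have := congrArg (finSuccEquiv ℂ s).symm hq
    simpa using this

lemma sum_update_add {s : ℕ} (k : Fin s → ℕ) (i : Fin s) (c : ℕ) :
    ∑ j, Function.update k i (k i + c) j = (∑ j, k j) + c := by
  rw [Finset.sum_update_of_mem (Finset.mem_univ i)]
  have h1 := Finset.add_sum_erase Finset.univ k (Finset.mem_univ i)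
  rw [Finset.erase_eq] at h1
  omega

lemma eval_shift_nat {s : ℕ} (i : Fin s) (p : MvPolynomial (Fin s) ℂ) (k : Fin s → ℕ) :
    eval (fun j => (k j : ℂ)) (aeval (shiftFun i) p)
      = eval (fun j => ((Function.update k i (k i + 1) j : ℕ) : ℂ)) p := by
  rw [eval_shift]
  have hfe : (fun j => eval (fun j' => ((k j' : ℂ))) (shiftFun i j))
      = fun j => ((Function.update k i (k i + 1) j : ℕ) : ℂ) := by
    funext j
    by_cases hj : j = i
    · subst hj; simp [shiftFun, Function.update_self]
    · simp [shiftFun, hj, Function.update_of_ne hj]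
  rw [hfe]

lemma simplex : ∀ (M : ℕ) {s : ℕ} (p : MvPolynomial (Fin s) ℂ), p.totalDegree ≤ M →
    (∀ k : Fin s → ℕ, (∑ i, k i) ≤ M → eval (fun i => (k i : ℂ)) p = 0) → p = 0 := by
  intro M
  induction M with
  | zero =>
    intro s p hdeg hvan
    have h0 : p.totalDegree = 0 := Nat.le_zero.mp hdeg
    have hp := eq_C_of_deg0 p h0
    have hv := hvan (fun _ => 0) (by simp)
    rw [hp] at hv ⊢
    simpa using hv
  | succ M ih =>
    intro s p hdeg hvan
    have hshift : ∀ i : Fin s, aeval (shiftFun i) p = p := by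
      intro i
      have h0 : aeval (shiftFun i) p - p = 0 := by
        apply ih _ (shift_sub_deg i p M hdeg)
        intro k hk
        rw [map_sub, eval_shift_nat]
        have hs1 : ∑ j, Function.update k i (k i + 1) j ≤ M + 1 := by
          rw [sum_update_add]; omega
        rw [hvan _ hs1, hvan k (by omega), sub_self]
      exact sub_eq_zero.mp h0
    have hlat : ∀ (N : ℕ) (k : Fin s → ℕ), (∑ i, k i) = N → eval (fun i => (k i : ℂ)) p = 0 := by
      intro N
      induction N with
      | zero => intro k hk; exact hvan k (by omega)
      | succ N ihN =>
        intro k hk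
        have hex : ∃ i, k i ≠ 0 := by
          by_contra hcon
          push_neg at hcon
          have : ∑ i, k i = 0 := Finset.sum_eq_zero fun i _ => hcon i
          omega
        obtain ⟨i, hi⟩ := hex
        set k' : Fin s → ℕ := Function.update k i (k i - 1) with hk'def
        have hup : Function.update k' i (k' i + 1) = k := by
          funext j
          by_cases hj : j = i
          · subst hj
            simp only [hk'def, Function.update_self]
            omega
          · simp [hk'def, Function.update_of_ne hj]
        have heq : eval (fun j => (k' j : ℂ)) p = eval (fun j => (k j : ℂ)) p := by
          conv_lhs => rw [← hshift i]
          rw [eval_shift_nat, hup]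
        have hsum' : ∑ j, k' j = N := by
          rw [← hup, sum_update_add] at hk
          omega
        rw [← heq]
        exact ihN k' hsum'
    exact grid p fun k => hlat (∑ i, k i) k rfl

lemma trace_map_pow {N : ℕ} {R S : Type*} [CommRing R] [CommRing S] (f : R →+* S)
    (M : Matrix (Fin N) (Fin N) R) (e : ℕ) :
    f (Matrix.trace (M ^ e)) = Matrix.trace ((f.mapMatrix M) ^ e) := by
  rw [← map_pow]
  simp [Matrix.trace, Matrix.diag, RingHom.mapMatrix_apply, Matrix.map_apply]

section Main

variable {n : ℕ} (d m : ℕ) (V : (Fin n → ℂ) → Matrix (Fin n) (Fin n) ℂ)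
  (h : ∀ α : Fin m → Fin n → ℂ, Matrix.trace ((∑ i, V (α i)) ^ d) = 0)

include h in
lemma lattice (s : ℕ) (k : Fin s → ℕ) (α : Fin s → Fin n → ℂ)
    (hk : ∑ i, k i = m) : Matrix.trace ((∑ i, (k i : ℂ) • V (α i)) ^ d) = 0 := by
  classical
  have hcard : Fintype.card (Σ i : Fin s, Fin (k i)) = m := by
    simp [Fintype.card_sigma, hk]
  let e : (Σ i : Fin s, Fin (k i)) ≃ Fin m := Fintype.equivFinOfCardEq hcard
  have hmain := h (fun j => α (e.symm j).1)
  have hmat : (∑ i, (k i : ℂ) • V (α i)) = ∑ j : Fin m, V (α ((e.symm j).1)) := by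
    rw [Equiv.sum_comp e.symm (fun p => V (α p.1)), ← Finset.univ_sigma_univ,
      Finset.sum_sigma]
    apply Finset.sum_congr rfl
    intro i _
    simp [Finset.sum_const, Nat.cast_smul_eq_nsmul]
  rw [hmat]
  exact hmain

include h in
lemma keySum (hmd : d ≤ m) (s : ℕ) (b : Fin s → ℂ) (α : Fin s → Fin n → ℂ)
    (hb : ∑ i, b i = (m : ℂ)) :
    Matrix.trace ((∑ i, b i • V (α i)) ^ d) = 0 := by
  classical
  set A : Fin s → Matrix (Fin n) (Fin n) ℂ := fun i => V (α i) with hA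
  set A0 : Matrix (Fin n) (Fin n) ℂ := V 0 with hA0
  let Cm : Matrix (Fin n) (Fin n) ℂ → Matrix (Fin n) (Fin n) (MvPolynomial (Fin s) ℂ) :=
    fun B => B.map C
  set N : Matrix (Fin n) (Fin n) (MvPolynomial (Fin s) ℂ) :=
    (∑ i, (X i : MvPolynomial (Fin s) ℂ) • Cm (A i))
      + (C (m : ℂ) - ∑ i, (X i : MvPolynomial (Fin s) ℂ)) • Cm A0 with hN
  have hXsum : ((∑ i, X i : MvPolynomial (Fin s) ℂ)).totalDegree ≤ 1 := by
    apply (totalDegree_finset_sum _ _).trans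
    apply Finset.sup_le
    intro i' _
    exact le_of_eq (totalDegree_X i')
  have hNentry : ∀ i j, (N i j).totalDegree ≤ 1 := by
    intro i j
    rw [hN]
    simp only [Matrix.add_apply, Matrix.sum_apply, Matrix.smul_apply, Matrix.map_apply,
      smul_eq_mul, Cm]
    apply (totalDegree_add _ _).trans
    apply max_le
    · apply (totalDegree_finset_sum _ _).trans
      apply Finset.sup_le
      intro i' _
      apply (totalDegree_mul _ _).trans
      have := le_of_eq (totalDegree_X (R := ℂ) i')
      simp only [totalDegree_C]
      omega
    · apply (totalDegree_mul _ _).trans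
      have h1 : ((C (m : ℂ) - ∑ i, X i : MvPolynomial (Fin s) ℂ)).totalDegree ≤ 1 := by
        apply (totalDegree_sub _ _).trans
        simp only [totalDegree_C]
        exact max_le (Nat.zero_le _) hXsum
      simp only [totalDegree_C]
      omega
  have hNpow : ∀ (e : ℕ) (i j : Fin n), ((N ^ e) i j).totalDegree ≤ e := by
    intro e
    induction e with
    | zero =>
      intro i j
      rw [pow_zero]
      by_cases hij : i = j <;> simp [Matrix.one_apply, hij]
    | succ e ihe =>
      intro i j
      rw [pow_succ, Matrix.mul_apply]
      apply (totalDegree_finset_sum _ _).trans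
      apply Finset.sup_le
      intro l _
      apply (totalDegree_mul _ _).trans
      have := ihe i l
      have := hNentry l j
      omega
  set Ψ : MvPolynomial (Fin s) ℂ := Matrix.trace (N ^ d) with hΨdef
  have hdeg : Ψ.totalDegree ≤ m := by
    rw [hΨdef]
    unfold Matrix.trace
    apply (totalDegree_finset_sum _ _).trans
    apply Finset.sup_le
    intro i _
    exact (hNpow d i i).trans hmd
  have hevalN : ∀ c : Fin s → ℂ, (RingHom.mapMatrix (eval c)) N
      = ∑ i, c i • A i + ((m : ℂ) - ∑ i, c i) • A0 := by
    intro c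
    ext i j
    rw [hN]
    simp [RingHom.mapMatrix_apply, Matrix.map_apply, Matrix.add_apply, Matrix.sum_apply,
      Matrix.smul_apply, smul_eq_mul, Cm]
  have hevalΨ : ∀ c : Fin s → ℂ, eval c Ψ
      = Matrix.trace ((∑ i, c i • A i + ((m : ℂ) - ∑ i, c i) • A0) ^ d) := by
    intro c
    rw [hΨdef, trace_map_pow (eval c) N d, hevalN]
  have hΨ : Ψ = 0 := by
    apply simplex m Ψ hdeg
    intro k hk
    rw [hevalΨ]
    have hcast : ((m : ℂ) - ∑ i, ((k i : ℕ) : ℂ)) = (((m - ∑ i, k i : ℕ)) : ℂ) := by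
      rw [Nat.cast_sub hk]
      push_cast
      ring
    rw [hcast]
    have hlat := lattice d m V h (s + 1) (Fin.cons (m - ∑ i, k i) k)
      (Fin.cons 0 α) (by rw [Fin.sum_univ_succ]; simp; omega)
    rw [Fin.sum_univ_succ] at hlat
    simp only [Fin.cons_zero, Fin.cons_succ] at hlat
    rw [add_comm] at hlat
    exact hlat
  have hfin := congrArg (eval b) hΨ
  rw [hevalΨ, hb, sub_self, zero_smul, add_zero] at hfin
  simpa using hfin

include h in
lemma keyScaled (hmd : d ≤ m) (hm : (m : ℂ) ≠ 0) (s : ℕ) (b : Fin s → ℂ)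
    (α : Fin s → Fin n → ℂ) (hb : ∑ i, b i ≠ 0) :
    Matrix.trace ((∑ i, b i • V (α i)) ^ d) = 0 := by
  set c : ℂ := (m : ℂ) / (∑ i, b i) with hc
  have hc0 : c ≠ 0 := div_ne_zero hm hb
  have hsum : ∑ i, (c * b i) = (m : ℂ) := by
    rw [← Finset.mul_sum, hc, div_mul_cancel₀ _ hb]
  have hks := keySum d m V h hmd s (fun i => c * b i) α hsum
  have hmat : (∑ i, (c * b i) • V (α i)) = c • ∑ i, b i • V (α i) := by
    rw [Finset.smul_sum]
    apply Finset.sum_congr rfl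
    intro i _
    rw [smul_smul]
  rw [hmat, smul_pow, Matrix.trace_smul] at hks
  have hcd : c ^ d ≠ 0 := pow_ne_zero d hc0
  exact (smul_eq_zero.mp hks).resolve_left hcd

end Main

end Stmt17Aux

open Stmt17Aux in
theorem stmt_17 (n d m : ℕ) (hmd : m ≥ d) (H : Fin n → MvPolynomial (Fin n) ℂ)
    (h : ∀ α : Fin m → Fin n → ℂ, Matrix.trace ((∑ i, jacEval H (α i)) ^ d) = 0) :
    ∀ (s : ℕ) (b : Fin s → ℂ) (α : Fin s → Fin n → ℂ),
      Matrix.trace ((∑ i, b i • jacEval H (α i)) ^ d) = 0 := by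
  intro s b α
  by_cases hd : d = 0
  · subst hd
    have := h (fun _ _ => 0)
    rw [pow_zero] at this ⊢
    exact this
  · have hm : (m : ℂ) ≠ 0 := Nat.cast_ne_zero.mpr (by omega)
    by_cases hb : (∑ i, b i) = 0
    · set V : (Fin n → ℂ) → Matrix (Fin n) (Fin n) ℂ := jacEval H with hV
      set B : Matrix (Fin n) (Fin n) ℂ := ∑ i, b i • V (α i) with hB
      set A0 : Matrix (Fin n) (Fin n) ℂ := V 0 with hA0
      set Q : Polynomial ℂ := Matrix.trace
        ((B.map Polynomial.C + (Polynomial.X : Polynomial ℂ) • A0.map Polynomial.C) ^ d) with hQ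
      have hevalQ : ∀ u : ℂ, Polynomial.eval u Q = Matrix.trace ((B + u • A0) ^ d) := by
        intro u
        have h1 := trace_map_pow (Polynomial.evalRingHom u)
          (B.map Polynomial.C + (Polynomial.X : Polynomial ℂ) • A0.map Polynomial.C) d
        rw [Polynomial.coe_evalRingHom] at h1
        rw [hQ]
        refine h1.trans ?_
        congr 2
        ext i j
        simp [RingHom.mapMatrix_apply, Matrix.map_apply, Matrix.add_apply,
          Matrix.smul_apply, smul_eq_mul]
        ring
      have hroot : ∀ u : ℂ, u ≠ 0 → Polynomial.eval u Q = 0 := by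
        intro u hu
        rw [hevalQ]
        have hsnoc : (∑ i : Fin (s + 1), Fin.snoc b u i) ≠ 0 := by
          rw [Fin.sum_univ_castSucc]
          simp only [Fin.snoc_castSucc, Fin.snoc_last]
          rw [hb, zero_add]
          exact hu
        have hks := keyScaled d m V h hmd hm (s + 1) (Fin.snoc b u) (Fin.snoc α 0) hsnoc
        rw [Fin.sum_univ_castSucc] at hks
        simp only [Fin.snoc_castSucc, Fin.snoc_last] at hks
        exact hks
      have hQ0 : Q = 0 := by
        apply Polynomial.eq_zero_of_infinite_isRoot
        apply Set.Infinite.mono ?_ ((Set.finite_singleton (0 : ℂ)).infinite_compl)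
        intro x hx
        exact hroot x (by simpa using hx)
      have hfin := congrArg (Polynomial.eval 0) hQ0
      rw [hevalQ 0] at hfin
      simp only [zero_smul, add_zero] at hfin
      simpa using hfin
    · exact keyScaled d m (jacEval H) h hmd hm s b α hb
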